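/- Let f : H → (−∞, ∞] be proper, closed, μ-strongly convex and differentiable with (1/β)-Lipschitz gradient (μ ≥ 0, β ≥ 0 allowed to be zero with conventions). Then for all x, y ∈ dom f: ⟨∇f(x) − ∇f(y), x − y⟩ ≥ max{ μ‖x−y‖² , β‖∇f(x)−∇f(y)‖² , (μ/(μβ+1))‖x−y‖² + (β/(μβ+1))‖∇f(x)−∇f(y)‖² }. -/

import Mathlib

open scoped InnerProductSpace

section Aux

variable {H : Type*} [NormedAddCommGroup H] [InnerProductSpace ℝ H] [CompleteSpace H]

/-- Derivative of a function along a line. -/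
lemma line_hasDerivAt {g : H → ℝ} {g' : H → H} (hg : ∀ p, HasGradientAt g (g' p) p)
    (x v : H) (t : ℝ) :
    HasDerivAt (fun t : ℝ => g (x + t • v)) ⟪g' (x + t • v), v⟫_ℝ t := by
  have hc : HasDerivAt (fun t : ℝ => x + t • v) v t := by
    simpa using ((hasDerivAt_id t).smul_const v).const_add x
  have hF : HasFDerivAt g (InnerProductSpace.toDual ℝ H (g' (x + t • v))) (x + t • v) :=
    hasGradientAt_iff_hasFDerivAt.mp (hg _)
  have h := hF.comp_hasDerivAt t hc
  simp only [InnerProductSpace.toDual_apply_apply] at h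
  exact h

/-- Subgradient inequality for a differentiable convex function. -/
lemma subgrad_ineq {g : H → ℝ} {g' : H → H} (hconv : ConvexOn ℝ Set.univ g)
    (hg : ∀ p, HasGradientAt g (g' p) p) (x y : H) :
    g x + ⟪g' x, y - x⟫_ℝ ≤ g y := by
  have hφconv : ConvexOn ℝ Set.univ (fun t : ℝ => g (x + t • (y - x))) := by
    have := hconv.comp_affineMap (AffineMap.lineMap x y : ℝ →ᵃ[ℝ] H)
    simp only [Set.preimage_univ, Function.comp_def] at this
    refine this.congr ?_
    intro t _
    simp [AffineMap.lineMap_apply, add_comm]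
  have hd : HasDerivAt (fun t : ℝ => g (x + t • (y - x))) ⟪g' (x + (0:ℝ) • (y - x)), y - x⟫_ℝ 0 :=
    line_hasDerivAt hg x (y - x) 0
  have := hφconv.le_slope_of_hasDerivAt (Set.mem_univ (0:ℝ)) (Set.mem_univ (1:ℝ)) one_pos hd
  simp only [slope_def_field, zero_smul, add_zero, one_smul, add_sub_cancel] at this
  norm_num at this
  linarith [this]

/-- Descent lemma for a function with `1/β`-Lipschitz gradient. -/
lemma descent_lemma {f : H → ℝ} {f' : H → H} {β : ℝ} (hβ : 0 < β)
    (hgrad : ∀ p, HasGradientAt f (f' p) p)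
    (hLip : ∀ x y, β * ‖f' x - f' y‖ ≤ ‖x - y‖) (x y : H) :
    f y ≤ f x + ⟪f' x, y - x⟫_ℝ + (1/β) / 2 * ‖y - x‖ ^ 2 := by
  set d := y - x with hd
  set ψ : ℝ → ℝ := fun t => f (x + t • d) - t * ⟪f' x, d⟫_ℝ - t ^ 2 / (2 * β) * ‖d‖ ^ 2 with hψdef
  have hψ : ∀ t : ℝ, HasDerivAt ψ
      (⟪f' (x + t • d), d⟫_ℝ - ⟪f' x, d⟫_ℝ - t / β * ‖d‖ ^ 2) t := by
    intro t
    have h1 := line_hasDerivAt hgrad x d t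
    have h2 : HasDerivAt (fun t : ℝ => t * ⟪f' x, d⟫_ℝ) ⟪f' x, d⟫_ℝ t := by
      simpa using (hasDerivAt_id t).mul_const ⟪f' x, d⟫_ℝ
    have h3 : HasDerivAt (fun t : ℝ => t ^ 2 / (2 * β) * ‖d‖ ^ 2) (t / β * ‖d‖ ^ 2) t := by
      have := (hasDerivAt_pow 2 t).mul_const (‖d‖ ^ 2 / (2 * β))
      have heq : (↑2 * t ^ (2 - 1)) * (‖d‖ ^ 2 / (2 * β)) = t / β * ‖d‖ ^ 2 := by
        field_simp
        ring
      have h4 : HasDerivAt (fun t : ℝ => t ^ 2 * (‖d‖ ^ 2 / (2 * β))) (t / β * ‖d‖ ^ 2) t := by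
        rw [← heq]; exact this
      convert h4 using 2 with s
      field_simp
    exact (h1.sub h2).sub h3
  have hanti : AntitoneOn ψ (Set.Icc (0:ℝ) 1) := by
    apply antitoneOn_of_deriv_nonpos (convex_Icc 0 1)
    · exact (Continuous.continuousOn (by
        exact continuous_iff_continuousAt.mpr fun t => (hψ t).differentiableAt.continuousAt))
    · intro t ht
      exact (hψ t).differentiableAt.differentiableWithinAt
    · intro t ht
      rw [interior_Icc] at ht
      rw [(hψ t).deriv]
      have hlip := hLip (x + t • d) x
      have hnorm : ‖x + t • d - x‖ = t * ‖d‖ := by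
        simp [norm_smul, abs_of_nonneg ht.1.le]
      rw [hnorm] at hlip
      have hcs : ⟪f' (x + t • d) - f' x, d⟫_ℝ ≤ ‖f' (x + t • d) - f' x‖ * ‖d‖ :=
        real_inner_le_norm _ _
      rw [inner_sub_left] at hcs
      have hn : 0 ≤ ‖d‖ := norm_nonneg d
      have hn2 : β * ‖f' (x + t • d) - f' x‖ ≤ t * ‖d‖ := hlip
      have h6 : β * (‖f' (x + t • d) - f' x‖ * ‖d‖) ≤ t * ‖d‖ ^ 2 := by
        nlinarith [mul_le_mul_of_nonneg_right hn2 hn]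
      have h7 : ‖f' (x + t • d) - f' x‖ * ‖d‖ ≤ t / β * ‖d‖ ^ 2 := by
        rw [div_mul_eq_mul_div, le_div_iff₀ hβ]
        nlinarith [h6]
      linarith [hcs, h7]
  have h01 := hanti (Set.mem_Icc.mpr ⟨le_refl 0, zero_le_one⟩)
    (Set.mem_Icc.mpr ⟨zero_le_one, le_refl 1⟩) zero_le_one
  have e0 : ψ 0 = f x := by simp [hψdef]
  have e1 : ψ 1 = f y - ⟪f' x, d⟫_ℝ - 1 / (2 * β) * ‖d‖ ^ 2 := by
    simp [hψdef, hd]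
  rw [e0, e1] at h01
  have : (1/β) / 2 * ‖d‖ ^ 2 = 1 / (2 * β) * ‖d‖ ^ 2 := by ring
  rw [this]
  linarith

/-- Cocoercivity from the subgradient inequality plus the descent lemma. -/
lemma coco {g : H → ℝ} {g' : H → H} {L : ℝ} (hL : 0 < L)
    (hsub : ∀ x y, g x + ⟪g' x, y - x⟫_ℝ ≤ g y)
    (hdesc : ∀ x y, g y ≤ g x + ⟪g' x, y - x⟫_ℝ + L / 2 * ‖y - x‖ ^ 2) :
    ∀ x y, 1 / L * ‖g' x - g' y‖ ^ 2 ≤ ⟪g' x - g' y, x - y⟫_ℝ := by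
  have key : ∀ x y, 1 / (2 * L) * ‖g' y - g' x‖ ^ 2 ≤ g y - g x - ⟪g' x, y - x⟫_ℝ := by
    intro x y
    set u := g' y - g' x with hu
    set z := y - (1 / L) • u with hz
    have h1 := hsub x z
    have h2 := hdesc y z
    have hzy : z - y = -((1 / L) • u) := by rw [hz]; abel
    have hzx : z - x = (y - x) - (1 / L) • u := by rw [hz]; abel
    rw [hzy] at h2
    rw [hzx] at h1
    rw [inner_sub_right, inner_smul_right] at h1
    rw [inner_neg_right, inner_smul_right] at h2
    have hnz : ‖-((1 / L) • u)‖ ^ 2 = (1 / L) ^ 2 * ‖u‖ ^ 2 := by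
      rw [norm_neg, norm_smul]
      simp [abs_of_pos (by positivity : (0:ℝ) < 1 / L), mul_pow]
    rw [hnz] at h2
    have hiu : ⟪g' y, u⟫_ℝ - ⟪g' x, u⟫_ℝ = ‖u‖ ^ 2 := by
      rw [← inner_sub_left, ← hu, real_inner_self_eq_norm_sq]
    have hL2 : L / 2 * ((1 / L) ^ 2 * ‖u‖ ^ 2) = 1 / (2 * L) * ‖u‖ ^ 2 := by
      field_simp
    rw [hL2] at h2
    have h4 : 1 / L * ⟪g' y, u⟫_ℝ - 1 / L * ⟪g' x, u⟫_ℝ = 1 / L * ‖u‖ ^ 2 := by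
      rw [← mul_sub, hiu]
    have h5 : 1 / L * ‖u‖ ^ 2 - 1 / (2 * L) * ‖u‖ ^ 2 = 1 / (2 * L) * ‖u‖ ^ 2 := by
      field_simp; ring
    linarith [h1, h2, h4, h5]
  intro x y
  have k1 := key x y
  have k2 := key y x
  have hswap : ‖g' y - g' x‖ = ‖g' x - g' y‖ := norm_sub_rev _ _
  rw [hswap] at k1
  have hI : ⟪g' x - g' y, x - y⟫_ℝ = - ⟪g' x, y - x⟫_ℝ - ⟪g' y, x - y⟫_ℝ := by
    rw [inner_sub_left]
    have : (y - x : H) = -(x - y) := by abel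
    rw [this, inner_neg_right]
    ring
  have hsum : 1 / L * ‖g' x - g' y‖ ^ 2 = 1 / (2 * L) * ‖g' x - g' y‖ ^ 2
      + 1 / (2 * L) * ‖g' x - g' y‖ ^ 2 := by field_simp; ring
  rw [hsum, hI]
  linarith

end Aux

section Main

variable {H : Type*} [NormedAddCommGroup H] [InnerProductSpace ℝ H] [CompleteSpace H]

lemma grad_sub_sq {f : H → ℝ} {f' : H → H} (μ : ℝ)
    (hgrad : ∀ p, HasGradientAt f (f' p) p) (p : H) :
    HasGradientAt (fun x => f x - μ / 2 * ‖x‖ ^ 2) (f' p - μ • p) p := by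
  rw [hasGradientAt_iff_hasFDerivAt]
  have h1 : HasFDerivAt f (InnerProductSpace.toDual ℝ H (f' p)) p :=
    hasGradientAt_iff_hasFDerivAt.mp (hgrad p)
  have h2 : HasFDerivAt (fun x : H => ‖x‖ ^ 2) (2 • (innerSL ℝ p)) p :=
    (hasStrictFDerivAt_norm_sq p).hasFDerivAt
  have h3 := h1.sub (h2.const_smul (μ / 2))
  refine h3.congr_fderiv ?_
  ext v
  simp [InnerProductSpace.toDual_apply_apply, inner_sub_left, inner_smul_left, real_inner_comm]
  ring

end Main

/-- Interpolation lower bound for the gradient of a μ-strongly convex function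
with (1/β)-Lipschitz gradient:
`⟨∇f x - ∇f y, x - y⟩ ≥ max{μ‖x-y‖², β‖∇f x - ∇f y‖²,
(μ/(μβ+1))‖x-y‖² + (β/(μβ+1))‖∇f x - ∇f y‖²}`. -/
theorem gradient_interpolation_lower_bound
    {H : Type*} [NormedAddCommGroup H] [InnerProductSpace ℝ H] [CompleteSpace H]
    (f : H → ℝ) (f' : H → H) (μ β : ℝ) (hμ : 0 ≤ μ) (hβ : 0 ≤ β)
    (hconv : ConvexOn ℝ Set.univ f)
    (hstrong : ConvexOn ℝ Set.univ (fun x => f x - μ / 2 * ‖x‖ ^ 2))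
    (hgrad : ∀ x, HasGradientAt f (f' x) x)
    (hLip : ∀ x y, β * ‖f' x - f' y‖ ≤ ‖x - y‖) :
    ∀ x y : H,
      max (max (μ * ‖x - y‖ ^ 2) (β * ‖f' x - f' y‖ ^ 2))
          (μ / (μ * β + 1) * ‖x - y‖ ^ 2 + β / (μ * β + 1) * ‖f' x - f' y‖ ^ 2)
        ≤ ⟪f' x - f' y, x - y⟫_ℝ := by
  intro x y
  set g : H → ℝ := fun x => f x - μ / 2 * ‖x‖ ^ 2 with hgdef
  set g' : H → H := fun p => f' p - μ • p with hg'def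
  have hggrad : ∀ p, HasGradientAt g (g' p) p := fun p => grad_sub_sq μ hgrad p
  have sub_g := subgrad_ineq hstrong hggrad
  have sub_f := subgrad_ineq hconv hgrad
  -- strong monotonicity
  have hexp : ⟪g' x - g' y, x - y⟫_ℝ = ⟪f' x - f' y, x - y⟫_ℝ - μ * ‖x - y‖ ^ 2 := by
    have : g' x - g' y = (f' x - f' y) - μ • (x - y) := by
      simp only [hg'def, smul_sub]; abel
    rw [this, inner_sub_left, inner_smul_left, real_inner_self_eq_norm_sq]
    norm_num
  have mono_g : 0 ≤ ⟪g' x - g' y, x - y⟫_ℝ := by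
    have h1 := sub_g x y
    have h2 := sub_g y x
    have e1 : (y - x : H) = -(x - y) := by abel
    rw [e1, inner_neg_right] at h1
    have expand : ⟪g' x - g' y, x - y⟫_ℝ = ⟪g' x, x - y⟫_ℝ - ⟪g' y, x - y⟫_ℝ :=
      inner_sub_left _ _ _
    rw [expand]
    linarith [h1, h2]
  have mono : μ * ‖x - y‖ ^ 2 ≤ ⟪f' x - f' y, x - y⟫_ℝ := by
    rw [hexp] at mono_g; linarith
  have Inn : 0 ≤ ⟪f' x - f' y, x - y⟫_ℝ := le_trans (by positivity) mono
  rcases hβ.eq_or_lt with hβ0 | hβpos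
  · -- β = 0
    subst hβ0
    simp only [zero_mul, mul_zero, zero_add, div_one, zero_div]
    apply max_le (max_le mono Inn)
    simpa using mono
  · -- β > 0
    have desc_f := descent_lemma hβpos hgrad hLip
    have coco_f := coco (by positivity : (0:ℝ) < 1/β) sub_f desc_f x y
    rw [one_div_one_div] at coco_f
    have third : μ / (μ * β + 1) * ‖x - y‖ ^ 2 + β / (μ * β + 1) * ‖f' x - f' y‖ ^ 2
        ≤ ⟪f' x - f' y, x - y⟫_ℝ := by
      have hs : (0:ℝ) < μ * β + 1 := by positivity
      rw [div_mul_eq_mul_div, div_mul_eq_mul_div, ← add_div, div_le_iff₀ hs]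
      rcases lt_or_ge (μ * β) 1 with hsmall | hbig
      · -- μβ < 1 : cocoercivity of g
        have hL' : (0:ℝ) < 1/β - μ := by
          rw [sub_pos, lt_div_iff₀ hβpos]
          linarith [hsmall]
        have desc_g : ∀ p q, g q ≤ g p + ⟪g' p, q - p⟫_ℝ + (1/β - μ) / 2 * ‖q - p‖ ^ 2 := by
          intro p q
          have hdf := desc_f p q
          have hnorm : ‖q‖ ^ 2 = ‖p‖ ^ 2 + 2 * ⟪p, q - p⟫_ℝ + ‖q - p‖ ^ 2 := by
            have := norm_add_sq_real p (q - p)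
            rwa [add_sub_cancel] at this
          simp only [hgdef, hg'def, inner_sub_left, inner_smul_left,
            RCLike.ofReal_real_eq_id, id_eq]
          simp only [conj_trivial]
          nlinarith [hdf, hnorm]
        have coco_g := coco hL' sub_g desc_g x y
        rw [hexp] at coco_g
        have hug : ‖g' x - g' y‖ ^ 2 = ‖f' x - f' y‖ ^ 2
            - 2 * μ * ⟪f' x - f' y, x - y⟫_ℝ + μ ^ 2 * ‖x - y‖ ^ 2 := by
          have e : g' x - g' y = (f' x - f' y) - μ • (x - y) := by
            simp only [hg'def, smul_sub]; abel
          rw [e, norm_sub_sq_real, inner_smul_right, norm_smul]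
          simp [abs_of_nonneg hμ, mul_pow]
          ring
        rw [hug] at coco_g
        rw [one_div, inv_mul_le_iff₀ hL'] at coco_g
        have step : β * (‖f' x - f' y‖ ^ 2 - 2 * μ * ⟪f' x - f' y, x - y⟫_ℝ
              + μ ^ 2 * ‖x - y‖ ^ 2)
            ≤ (1 - μ * β) * (⟪f' x - f' y, x - y⟫_ℝ - μ * ‖x - y‖ ^ 2) := by
          have h := mul_le_mul_of_nonneg_left coco_g hβpos.le
          have hb2 : β * (1 / β - μ) = 1 - μ * β := by
            rw [mul_sub, mul_one_div, div_self hβpos.ne']; ring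
          have hb : β * ((1 / β - μ) * (⟪f' x - f' y, x - y⟫_ℝ - μ * ‖x - y‖ ^ 2))
              = (1 - μ * β) * (⟪f' x - f' y, x - y⟫_ℝ - μ * ‖x - y‖ ^ 2) := by
            rw [← mul_assoc, hb2]
          linarith [h, hb.le, hb.ge]
        nlinarith [step]
      · -- μβ ≥ 1 : convex combination of the two bounds
        nlinarith [mono, coco_f, Inn, hbig,
          mul_nonneg Inn (by linarith : (0:ℝ) ≤ μ * β - 1)]
    exact max_le (max_le mono coco_f) third
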